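/- Let d ≠ 0, f, ζ ∈ ℝ and let a ∈ C²([0,2π], ℝ²) be a 2π-periodic solution of the stationary Lugiato-Lefever system. Then ‖a‖_{L^∞} ≤ |f| (1 + 12π² f² |d|^{-1}). -/

import Mathlib

open Real intervalIntegral

lemma aux_c2 (f : ℝ → ℝ) (hf : ContDiff ℝ 2 f) :
    Differentiable ℝ f ∧ Differentiable ℝ (deriv f) ∧ Continuous (deriv (deriv f)) := by
  have h2 : (2 : WithTop ℕ∞) = 1 + 1 := by norm_num
  rw [h2, contDiff_succ_iff_deriv] at hf
  obtain ⟨h1, -, h3⟩ := hf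
  rw [contDiff_one_iff_deriv] at h3
  exact ⟨h1, h3.1, h3.2⟩

lemma aux_periodic_deriv (f : ℝ → ℝ) (c : ℝ) (h : Function.Periodic f c) :
    Function.Periodic (deriv f) c := by
  intro x
  have : (fun y => f (y + c)) = f := funext h
  rw [← deriv_comp_add_const, this]

lemma aux_ftc_zero (h h' : ℝ → ℝ) (hder : ∀ x, HasDerivAt h (h' x) x)
    (hcont : Continuous h') (hper : Function.Periodic h (2 * π)) :
    ∫ x in (0:ℝ)..(2 * π), h' x = 0 := by
  rw [intervalIntegral.integral_eq_sub_of_hasDerivAt (fun x _ => hder x)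
    (hcont.intervalIntegrable _ _)]
  have := hper 0
  simp at this
  rw [this, sub_self]

lemma aux_cs (u v : ℝ → ℝ) (hu : Continuous u) (hv : Continuous v) :
    (∫ x in (0:ℝ)..(2 * π), u x * v x) ^ 2
      ≤ (∫ x in (0:ℝ)..(2 * π), u x ^ 2) * (∫ x in (0:ℝ)..(2 * π), v x ^ 2) := by
  set A := ∫ x in (0:ℝ)..(2 * π), u x ^ 2 with hA
  set B := ∫ x in (0:ℝ)..(2 * π), u x * v x with hB
  set C := ∫ x in (0:ℝ)..(2 * π), v x ^ 2 with hC
  have hpi : (0:ℝ) ≤ 2 * π := by positivity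
  have key : ∀ t : ℝ, 0 ≤ C * (t * t) + (2 * B) * t + A := by
    intro t
    have h0 : 0 ≤ ∫ x in (0:ℝ)..(2 * π), (t * v x + u x) ^ 2 :=
      intervalIntegral.integral_nonneg hpi (fun x _ => sq_nonneg _)
    have hexp : ∀ x : ℝ, (t * v x + u x) ^ 2
        = t * t * v x ^ 2 + 2 * t * (u x * v x) + u x ^ 2 := by intro x; ring
    rw [intervalIntegral.integral_congr (g := fun x =>
        t * t * v x ^ 2 + 2 * t * (u x * v x) + u x ^ 2) (fun x _ => hexp x)] at h0
    rw [intervalIntegral.integral_add (f := fun x => t * t * v x ^ 2 + 2 * t * (u x * v x)) (g := fun x => u x ^ 2) (((continuous_const.mul (hv.pow 2)).intervalIntegrable _ _).add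
        ((continuous_const.mul (hu.mul hv)).intervalIntegrable _ _))
        ((hu.pow 2).intervalIntegrable _ _),
      intervalIntegral.integral_add (f := fun x => t * t * v x ^ 2) (g := fun x => 2 * t * (u x * v x)) ((continuous_const.mul (hv.pow 2)).intervalIntegrable _ _)
        ((continuous_const.mul (hu.mul hv)).intervalIntegrable _ _),
      intervalIntegral.integral_const_mul, intervalIntegral.integral_const_mul] at h0
    nlinarith [h0]
  have hdisc := discrim_le_zero key
  rw [discrim] at hdisc
  nlinarith [hdisc]

lemma aux_cs' (u v : ℝ → ℝ) (hu : Continuous u) (hv : Continuous v) :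
    (∫ x in (0:ℝ)..(2 * π), u x * v x)
      ≤ Real.sqrt (∫ x in (0:ℝ)..(2 * π), u x ^ 2)
        * Real.sqrt (∫ x in (0:ℝ)..(2 * π), v x ^ 2) := by
  have hpi : (0:ℝ) ≤ 2 * π := by positivity
  have h := aux_cs u v hu hv
  have hA : 0 ≤ ∫ x in (0:ℝ)..(2 * π), u x ^ 2 :=
    intervalIntegral.integral_nonneg hpi (fun x _ => sq_nonneg _)
  calc (∫ x in (0:ℝ)..(2 * π), u x * v x)
      ≤ |∫ x in (0:ℝ)..(2 * π), u x * v x| := le_abs_self _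
    _ = Real.sqrt ((∫ x in (0:ℝ)..(2 * π), u x * v x) ^ 2) := (Real.sqrt_sq_eq_abs _).symm
    _ ≤ Real.sqrt ((∫ x in (0:ℝ)..(2 * π), u x ^ 2) * (∫ x in (0:ℝ)..(2 * π), v x ^ 2)) :=
        Real.sqrt_le_sqrt h
    _ = _ := Real.sqrt_mul hA _

set_option maxHeartbeats 1000000 in
theorem stmt_3 (d ζ f : ℝ) (hd : d ≠ 0) (a1 a2 : ℝ → ℝ)
    (ha1 : ContDiff ℝ 2 a1) (ha2 : ContDiff ℝ 2 a2)
    (hp1 : Function.Periodic a1 (2 * π)) (hp2 : Function.Periodic a2 (2 * π))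
    (heq1 : ∀ x, -d * deriv (deriv a1) x
      = -(a2 x) - ζ * a1 x + (a1 x ^ 2 + a2 x ^ 2) * a1 x)
    (heq2 : ∀ x, -d * deriv (deriv a2) x
      = a1 x - ζ * a2 x + (a1 x ^ 2 + a2 x ^ 2) * a2 x - f) :
    ∀ x ∈ Set.Icc (0:ℝ) (2 * π),
      Real.sqrt (a1 x ^ 2 + a2 x ^ 2) ≤ |f| * (1 + 12 * π ^ 2 * f ^ 2 * |d|⁻¹) := by
  obtain ⟨hda1, hdb1, hcc1⟩ := aux_c2 a1 ha1
  obtain ⟨hda2, hdb2, hcc2⟩ := aux_c2 a2 ha2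
  set b1 := deriv a1 with hb1def
  set b2 := deriv a2 with hb2def
  set c1 := deriv b1 with hc1def
  set c2 := deriv b2 with hc2def
  have ca1 : Continuous a1 := ha1.continuous
  have ca2 : Continuous a2 := ha2.continuous
  have cb1 : Continuous b1 := hdb1.continuous
  have cb2 : Continuous b2 := hdb2.continuous
  have hpb1 : Function.Periodic b1 (2 * π) := aux_periodic_deriv a1 _ hp1
  have hpb2 : Function.Periodic b2 (2 * π) := aux_periodic_deriv a2 _ hp2
  have hDa1 : ∀ x, HasDerivAt a1 (b1 x) x := fun x => (hda1 x).hasDerivAt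
  have hDa2 : ∀ x, HasDerivAt a2 (b2 x) x := fun x => (hda2 x).hasDerivAt
  have hDb1 : ∀ x, HasDerivAt b1 (c1 x) x := fun x => (hdb1 x).hasDerivAt
  have hDb2 : ∀ x, HasDerivAt b2 (c2 x) x := fun x => (hdb2 x).hasDerivAt
  have hpi : (0:ℝ) < π := Real.pi_pos
  have hK : (0:ℝ) < |d| := abs_pos.mpr hd
  set K := |d| with hKdef
  -- c1, c2 formulas
  have hc1x : ∀ x, c1 x = (a2 x + ζ * a1 x - (a1 x ^ 2 + a2 x ^ 2) * a1 x) / d := by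
    intro x; have h := heq1 x; field_simp; linear_combination -h
  have hc2x : ∀ x, c2 x = (-(a1 x) + ζ * a2 x - (a1 x ^ 2 + a2 x ^ 2) * a2 x + f) / d := by
    intro x; have h := heq2 x; field_simp; linear_combination -h
  -- main functions
  set g : ℝ → ℝ := fun x => a1 x ^ 2 + a2 x ^ 2 with hgdef
  set W : ℝ → ℝ := fun x => a1 x * b2 x - a2 x * b1 x with hWdef
  set w' : ℝ → ℝ := fun x => (f * a1 x - g x) / d with hw'def
  set gp : ℝ → ℝ := fun x => 2 * (a1 x * b1 x + a2 x * b2 x) with hgpdef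
  have cg : Continuous g := by simp only [hgdef]; fun_prop
  have cW : Continuous W := by simp only [hWdef]; fun_prop
  have cw' : Continuous w' := by simp only [hw'def]; fun_prop
  have cgp : Continuous gp := by simp only [hgpdef]; fun_prop
  have hgnn : ∀ x, 0 ≤ g x := fun x => by positivity
  have hpg : Function.Periodic g (2 * π) := fun x => by simp only [hgdef, hp1 x, hp2 x]
  have hpW : Function.Periodic W (2 * π) := fun x => by
    simp only [hWdef, hp1 x, hp2 x, hpb1 x, hpb2 x]
  have hpw' : Function.Periodic w' (2 * π) := fun x => by
    simp only [hw'def, hp1 x, hpg x]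
  have hDg : ∀ x, HasDerivAt g (gp x) x := by
    intro x
    have h := ((hDa1 x).pow 2).add ((hDa2 x).pow 2)
    refine h.congr_deriv ?_
    simp only [hgpdef]; ring
  have hDW : ∀ x, HasDerivAt W (w' x) x := by
    intro x
    have h := ((hDa1 x).mul (hDb2 x)).sub ((hDa2 x).mul (hDb1 x))
    refine h.congr_deriv ?_
    simp only [hw'def, hc1x x, hc2x x, hgdef]
    field_simp; ring
  -- quantities
  set I := ∫ x in (0:ℝ)..(2 * π), g x with hIdef
  set Sa := ∫ x in (0:ℝ)..(2 * π), a1 x with hSadef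
  set X2 := ∫ x in (0:ℝ)..(2 * π), (b1 x ^ 2 + b2 x ^ 2) with hX2def
  set Gp := ∫ x in (0:ℝ)..(2 * π), |gp x| with hGpdef
  set V := ∫ x in (0:ℝ)..(2 * π), |w' x| with hVdef
  have hInn : 0 ≤ I := intervalIntegral.integral_nonneg (by positivity) (fun x _ => hgnn x)
  have hX2nn : 0 ≤ X2 := intervalIntegral.integral_nonneg (by positivity) (fun x _ => by positivity)
  have hGpnn : 0 ≤ Gp := intervalIntegral.integral_nonneg (by positivity) (fun x _ => abs_nonneg _)
  have hVnn : 0 ≤ V := intervalIntegral.integral_nonneg (by positivity) (fun x _ => abs_nonneg _)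
  -- identity 1 : I = f * Sa
  have hI1 : I = f * Sa := by
    have h0 := aux_ftc_zero W w' hDW cw' hpW
    have h1 : (∫ x in (0:ℝ)..(2 * π), w' x)
        = (∫ x in (0:ℝ)..(2 * π), (f * a1 x - g x)) / d := by
      simp only [hw'def]
      rw [intervalIntegral.integral_div]
    rw [h1, div_eq_zero_iff] at h0
    have h2 : (∫ x in (0:ℝ)..(2 * π), (f * a1 x - g x)) = 0 := h0.resolve_right hd
    rw [intervalIntegral.integral_sub (f := fun x => f * a1 x) (g := g) ((continuous_const.mul ca1).intervalIntegrable _ _)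
      (cg.intervalIntegrable _ _), intervalIntegral.integral_const_mul] at h2
    rw [hIdef, hSadef]
    linarith [h2]
  -- L2 : I ≤ 2π f²
  have ha1sqle : (∫ x in (0:ℝ)..(2 * π), a1 x ^ 2) ≤ I := by
    apply intervalIntegral.integral_mono_on (by positivity)
      ((ca1.pow 2).intervalIntegrable _ _) (cg.intervalIntegrable _ _)
    intro x _
    simp only [hgdef, Pi.pow_apply]
    nlinarith [sq_nonneg (a2 x)]
  have hone : (∫ x in (0:ℝ)..(2 * π), (1:ℝ) ^ 2) = 2 * π := by simp
  have hIle : I ≤ 2 * π * f ^ 2 := by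
    have hcs := aux_cs a1 (fun _ => (1:ℝ)) ca1 continuous_const
    rw [hone] at hcs
    simp only [mul_one] at hcs
    rw [← hSadef] at hcs
    have hSa2 : Sa ^ 2 ≤ I * (2 * π) := le_trans hcs (by nlinarith [ha1sqle])
    rcases eq_or_lt_of_le hInn with h | h
    · nlinarith
    · have : I ^ 2 ≤ 2 * π * f ^ 2 * I := by
        calc I ^ 2 = f ^ 2 * Sa ^ 2 := by rw [hI1]; ring
          _ ≤ f ^ 2 * (I * (2 * π)) := by nlinarith [sq_nonneg f]
          _ = 2 * π * f ^ 2 * I := by ring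
      nlinarith
  -- L3 : ∫ |a1| ≤ 2π |f|
  have ha1abs : (∫ x in (0:ℝ)..(2 * π), |a1 x|) ≤ 2 * π * |f| := by
    have hcs := aux_cs (fun x => |a1 x|) (fun _ => (1:ℝ)) ca1.abs continuous_const
    rw [hone] at hcs
    simp only [mul_one, sq_abs] at hcs
    have h1 : (∫ x in (0:ℝ)..(2 * π), |a1 x|) ^ 2 ≤ (2 * π * |f|) ^ 2 := by
      calc (∫ x in (0:ℝ)..(2 * π), |a1 x|) ^ 2
          ≤ (∫ x in (0:ℝ)..(2 * π), a1 x ^ 2) * (2 * π) := hcs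
        _ ≤ (2 * π * f ^ 2) * (2 * π) := by nlinarith [le_trans ha1sqle hIle]
        _ = (2 * π * |f|) ^ 2 := by rw [← sq_abs f]; ring
    have h2 : (0:ℝ) ≤ ∫ x in (0:ℝ)..(2 * π), |a1 x| :=
      intervalIntegral.integral_nonneg (by positivity) (fun x _ => abs_nonneg _)
    have h3 : (0:ℝ) ≤ 2 * π * |f| := by positivity
    calc (∫ x in (0:ℝ)..(2 * π), |a1 x|)
        = Real.sqrt ((∫ x in (0:ℝ)..(2 * π), |a1 x|) ^ 2) := (Real.sqrt_sq h2).symm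
      _ ≤ Real.sqrt ((2 * π * |f|) ^ 2) := Real.sqrt_le_sqrt h1
      _ = 2 * π * |f| := Real.sqrt_sq h3
  -- L4 : V ≤ 4π f² / K
  have hV : V ≤ 4 * π * f ^ 2 / K := by
    have step1 : V ≤ ∫ x in (0:ℝ)..(2 * π), (|f| * |a1 x| + g x) / K := by
      apply intervalIntegral.integral_mono_on (by positivity)
        (cw'.abs.intervalIntegrable _ _)
        (((((continuous_const.mul ca1.abs).add cg)).div_const K).intervalIntegrable _ _)
      intro x _
      simp only [hw'def]
      rw [abs_div, hKdef]
      gcongr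
      calc |f * a1 x - g x| ≤ |f * a1 x| + |g x| := abs_sub _ _
        _ = |f| * |a1 x| + g x := by rw [abs_mul, abs_of_nonneg (hgnn x)]
    have step2 : (∫ x in (0:ℝ)..(2 * π), (|f| * |a1 x| + g x) / K)
        = (|f| * (∫ x in (0:ℝ)..(2 * π), |a1 x|) + I) / K := by
      rw [intervalIntegral.integral_div,
        intervalIntegral.integral_add (f := fun x => |f| * |a1 x|) (g := g) ((continuous_const.mul ca1.abs).intervalIntegrable _ _)
          (cg.intervalIntegrable _ _), intervalIntegral.integral_const_mul]
    rw [step2] at step1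
    have habs2 : |f| * (2 * π * |f|) = 2 * π * f ^ 2 := by
      rw [← sq_abs f]; ring
    calc V ≤ (|f| * (∫ x in (0:ℝ)..(2 * π), |a1 x|) + I) / K := step1
      _ ≤ (|f| * (2 * π * |f|) + 2 * π * f ^ 2) / K := by
          apply (div_le_div_iff_of_pos_right hK).mpr
          exact add_le_add (mul_le_mul_of_nonneg_left ha1abs (abs_nonneg f)) hIle
      _ = (2 * π * f ^ 2 + 2 * π * f ^ 2) / K := by rw [habs2]
      _ = 4 * π * f ^ 2 / K := by ring
  -- L5 : ∫ W = 0
  set Q : ℝ → ℝ := fun x => -(d / 2) * (b1 x ^ 2 + b2 x ^ 2) + (ζ / 2) * g x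
      - (1 / 4) * (g x) ^ 2 + f * a2 x with hQdef
  have hpQ : Function.Periodic Q (2 * π) := fun x => by
    simp only [hQdef, hpb1 x, hpb2 x, hpg x, hp2 x]
  have hDQ : ∀ x, HasDerivAt Q (W x) x := by
    intro x
    have h1 : HasDerivAt (fun y => -(d / 2) * (b1 y ^ 2 + b2 y ^ 2))
        (-(d / 2) * (2 * b1 x ^ 1 * c1 x + 2 * b2 x ^ 1 * c2 x)) x :=
      (((hDb1 x).pow 2).add ((hDb2 x).pow 2)).const_mul _
    have h2 : HasDerivAt (fun y => (ζ / 2) * g y) ((ζ / 2) * gp x) x :=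
      (hDg x).const_mul _
    have h3 : HasDerivAt (fun y => (1 / 4 : ℝ) * (g y) ^ 2)
        ((1 / 4 : ℝ) * (2 * g x ^ 1 * gp x)) x := ((hDg x).pow 2).const_mul _
    have h4 : HasDerivAt (fun y => f * a2 y) (f * b2 x) x := (hDa2 x).const_mul _
    have h := ((h1.add h2).sub h3).add h4
    refine h.congr_deriv ?_
    simp only [hWdef, hc1x x, hc2x x, hgdef, hgpdef, pow_one]
    field_simp
    ring
  have hWint : (∫ x in (0:ℝ)..(2 * π), W x) = 0 := aux_ftc_zero Q W hDQ cW hpQ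
  -- L6 : zero of W
  have hx0 : ∃ x₀ ∈ Set.Icc (0:ℝ) (2 * π), W x₀ = 0 := by
    have hne : (Set.Icc (0:ℝ) (2 * π)).Nonempty := Set.nonempty_Icc.mpr (by positivity)
    obtain ⟨u, hu, humin⟩ := isCompact_Icc.exists_isMinOn hne cW.continuousOn
    obtain ⟨v, hv, hvmax⟩ := isCompact_Icc.exists_isMaxOn hne cW.continuousOn
    have humin' := isMinOn_iff.mp humin
    have hvmax' := isMaxOn_iff.mp hvmax
    rcases le_or_gt (W u) 0 with hWu | hWu
    · rcases le_or_gt 0 (W v) with hWv | hWv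
      · have hsub : Set.uIcc u v ⊆ Set.Icc (0:ℝ) (2 * π) := by
          rw [show Set.Icc (0:ℝ) (2 * π) = Set.uIcc (0:ℝ) (2 * π) from
            (Set.uIcc_of_le (by positivity)).symm] at hu hv ⊢
          exact Set.uIcc_subset_uIcc hu hv
        have hivt := intermediate_value_uIcc (cW.continuousOn (s := Set.uIcc u v))
        have h0mem : (0:ℝ) ∈ Set.uIcc (W u) (W v) := Set.mem_uIcc.mpr (Or.inl ⟨hWu, hWv⟩)
        obtain ⟨x₀, hx₀, hWx₀⟩ := hivt h0mem
        exact ⟨x₀, hsub hx₀, hWx₀⟩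
      · exfalso
        have hconst : (∫ x in (0:ℝ)..(2 * π), W x) ≤ ∫ x in (0:ℝ)..(2 * π), W v := by
          apply intervalIntegral.integral_mono_on (by positivity)
            (cW.intervalIntegrable _ _) (intervalIntegrable_const)
          exact fun x hxm => hvmax' x hxm
        rw [hWint, intervalIntegral.integral_const, smul_eq_mul, sub_zero] at hconst
        nlinarith
    · exfalso
      have hconst : (∫ x in (0:ℝ)..(2 * π), W u) ≤ ∫ x in (0:ℝ)..(2 * π), W x := by
        apply intervalIntegral.integral_mono_on (by positivity)
          (intervalIntegrable_const) (cW.intervalIntegrable _ _)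
        exact fun x hxm => humin' x hxm
      rw [hWint, intervalIntegral.integral_const, smul_eq_mul, sub_zero] at hconst
      nlinarith
  -- L7 : sup bound on W
  have hWsup : ∀ x ∈ Set.Icc (0:ℝ) (2 * π), |W x| ≤ V / 2 := by
    obtain ⟨x₀, hx₀, hWx₀⟩ := hx0
    have habsper : Function.Periodic (fun t => |w' t|) (2 * π) := fun t => by
      simp only [hpw' t]
    have hshift : (∫ t in x₀..(x₀ + 2 * π), |w' t|) = V := by
      have h := habsper.intervalIntegral_add_eq x₀ 0
      rw [zero_add] at h
      exact h
    have key : ∀ z, x₀ ≤ z → z ≤ x₀ + 2 * π → 2 * |W z| ≤ V := by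
      intro z hz1 hz2
      have e1 : (∫ t in x₀..z, w' t) = W z - W x₀ :=
        intervalIntegral.integral_eq_sub_of_hasDerivAt (fun t _ => hDW t)
          (cw'.intervalIntegrable _ _)
      have e2 : (∫ t in z..(x₀ + 2 * π), w' t) = W (x₀ + 2 * π) - W z :=
        intervalIntegral.integral_eq_sub_of_hasDerivAt (fun t _ => hDW t)
          (cw'.intervalIntegrable _ _)
      have hper0 : W (x₀ + 2 * π) = 0 := by rw [hpW x₀, hWx₀]
      have bd1 : |W z| ≤ ∫ t in x₀..z, |w' t| := by
        have := intervalIntegral.abs_integral_le_integral_abs (f := w') (μ := MeasureTheory.volume) hz1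
        rw [e1, hWx₀, sub_zero] at this
        exact this
      have bd2 : |W z| ≤ ∫ t in z..(x₀ + 2 * π), |w' t| := by
        have := intervalIntegral.abs_integral_le_integral_abs (f := w') (μ := MeasureTheory.volume) hz2
        rw [e2, hper0, zero_sub, abs_neg] at this
        exact this
      have hadd : (∫ t in x₀..z, |w' t|) + (∫ t in z..(x₀ + 2 * π), |w' t|)
          = ∫ t in x₀..(x₀ + 2 * π), |w' t| :=
        intervalIntegral.integral_add_adjacent_intervals
          (cw'.abs.intervalIntegrable _ _) (cw'.abs.intervalIntegrable _ _)
      rw [hshift] at hadd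
      linarith
    intro x hx
    rcases le_or_gt x₀ x with hc | hc
    · have := key x hc (by linarith [hx.2, hx₀.1])
      linarith
    · have h2 := key (x + 2 * π) (by linarith [hx.1, hx₀.2]) (by linarith)
      rw [hpW x] at h2
      linarith
  -- L8 : X2 = ∫ gp * W
  set F : ℝ → ℝ := fun x => a1 x * b1 x + a2 x * b2 x - g x * W x + ζ * W x - f * b1 x
    with hFdef
  have hpF : Function.Periodic F (2 * π) := fun x => by
    simp only [hFdef, hp1 x, hp2 x, hpb1 x, hpb2 x, hpg x, hpW x]
  have hDF : ∀ x, HasDerivAt F ((b1 x ^ 2 + b2 x ^ 2) - gp x * W x) x := by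
    intro x
    have h1 : HasDerivAt (fun y => a1 y * b1 y) (b1 x * b1 x + a1 x * c1 x) x :=
      (hDa1 x).mul (hDb1 x)
    have h2 : HasDerivAt (fun y => a2 y * b2 y) (b2 x * b2 x + a2 x * c2 x) x :=
      (hDa2 x).mul (hDb2 x)
    have h3 : HasDerivAt (fun y => g y * W y) (gp x * W x + g x * w' x) x :=
      (hDg x).mul (hDW x)
    have h4 : HasDerivAt (fun y => ζ * W y) (ζ * w' x) x := (hDW x).const_mul _
    have h5 : HasDerivAt (fun y => f * b1 y) (f * c1 x) x := (hDb1 x).const_mul _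
    have h := (((h1.add h2).sub h3).add h4).sub h5
    refine h.congr_deriv ?_
    simp only [hc1x x, hc2x x, hw'def, hWdef, hgdef, hgpdef]
    field_simp
    ring
  have hcF' : Continuous (fun x => (b1 x ^ 2 + b2 x ^ 2) - gp x * W x) :=
    ((cb1.pow 2).add (cb2.pow 2)).sub (cgp.mul cW)
  have hFzero := aux_ftc_zero F _ hDF hcF' hpF
  have hX2eq : X2 = ∫ x in (0:ℝ)..(2 * π), gp x * W x := by
    rw [intervalIntegral.integral_sub (f := fun x => b1 x ^ 2 + b2 x ^ 2) (g := fun x => gp x * W x) (((cb1.pow 2).add (cb2.pow 2)).intervalIntegrable _ _)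
      ((cgp.mul cW).intervalIntegrable _ _)] at hFzero
    rw [hX2def]
    linarith [hFzero]
  -- L9/L10/L11 : bound on √X2
  set u : ℝ → ℝ := fun x => Real.sqrt (g x) with hudef
  set v : ℝ → ℝ := fun x => Real.sqrt (b1 x ^ 2 + b2 x ^ 2) with hvdef
  have hcu : Continuous u := Real.continuous_sqrt.comp cg
  have hcv : Continuous v := Real.continuous_sqrt.comp ((cb1.pow 2).add (cb2.pow 2))
  have husq : ∀ x, u x ^ 2 = g x := fun x => Real.sq_sqrt (hgnn x)
  have hvsq : ∀ x, v x ^ 2 = b1 x ^ 2 + b2 x ^ 2 := fun x => Real.sq_sqrt (by positivity)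
  have hintu : (∫ x in (0:ℝ)..(2 * π), u x ^ 2) = I :=
    intervalIntegral.integral_congr (fun x _ => husq x)
  have hintv : (∫ x in (0:ℝ)..(2 * π), v x ^ 2) = X2 :=
    intervalIntegral.integral_congr (fun x _ => hvsq x)
  have hGple : Gp ≤ 2 * Real.sqrt I * Real.sqrt X2 := by
    have hpt : ∀ x, |gp x| ≤ 2 * (u x * v x) := by
      intro x
      have hsq : (a1 x * b1 x + a2 x * b2 x) ^ 2 ≤ g x * (b1 x ^ 2 + b2 x ^ 2) := by
        simp only [hgdef]
        nlinarith [sq_nonneg (a1 x * b2 x - a2 x * b1 x)]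
      have h1 : |a1 x * b1 x + a2 x * b2 x| ≤ u x * v x := by
        rw [← Real.sqrt_sq_eq_abs, hudef, hvdef, ← Real.sqrt_mul (hgnn x)]
        exact Real.sqrt_le_sqrt hsq
      calc |gp x| = 2 * |a1 x * b1 x + a2 x * b2 x| := by
            simp only [hgpdef]
            rw [abs_mul]
            norm_num
        _ ≤ 2 * (u x * v x) := by linarith
    calc Gp ≤ ∫ x in (0:ℝ)..(2 * π), 2 * (u x * v x) := by
          apply intervalIntegral.integral_mono_on (by positivity)
            (cgp.abs.intervalIntegrable _ _)
            ((continuous_const.mul (hcu.mul hcv)).intervalIntegrable _ _)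
          exact fun x _ => hpt x
      _ = 2 * ∫ x in (0:ℝ)..(2 * π), u x * v x := intervalIntegral.integral_const_mul _ _
      _ ≤ 2 * (Real.sqrt (∫ x in (0:ℝ)..(2 * π), u x ^ 2)
            * Real.sqrt (∫ x in (0:ℝ)..(2 * π), v x ^ 2)) := by
          have := aux_cs' u v hcu hcv
          linarith
      _ = 2 * Real.sqrt I * Real.sqrt X2 := by rw [hintu, hintv]; ring
  have hsqI : Real.sqrt I ≤ Real.sqrt (2 * π) * |f| := by
    calc Real.sqrt I ≤ Real.sqrt (2 * π * f ^ 2) := Real.sqrt_le_sqrt hIle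
      _ = Real.sqrt (2 * π) * Real.sqrt (f ^ 2) := Real.sqrt_mul (by positivity) _
      _ = Real.sqrt (2 * π) * |f| := by rw [Real.sqrt_sq_eq_abs]
  have hX2le : Real.sqrt X2 ≤ 4 * π * Real.sqrt (2 * π) * f ^ 2 * |f| / K := by
    have hb1 : X2 ≤ Gp * (V / 2) := by
      rw [hX2eq]
      calc (∫ x in (0:ℝ)..(2 * π), gp x * W x)
          ≤ ∫ x in (0:ℝ)..(2 * π), |gp x| * (V / 2) := by
            apply intervalIntegral.integral_mono_on (by positivity)
              ((cgp.mul cW).intervalIntegrable _ _)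
              ((cgp.abs.mul continuous_const).intervalIntegrable _ _)
            intro x hxm
            calc gp x * W x ≤ |gp x * W x| := le_abs_self _
              _ = |gp x| * |W x| := abs_mul _ _
              _ ≤ |gp x| * (V / 2) :=
                  mul_le_mul_of_nonneg_left (hWsup x hxm) (abs_nonneg _)
        _ = Gp * (V / 2) := intervalIntegral.integral_mul_const _ _
    have hb2 : X2 ≤ (2 * Real.sqrt I * Real.sqrt X2) * (V / 2) := by
      have hV2 : 0 ≤ V / 2 := by linarith
      nlinarith [hb1, hGple, hV2]
    set S := Real.sqrt X2 with hSdef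
    have hSnn : 0 ≤ S := Real.sqrt_nonneg _
    have hS2 : S ^ 2 = X2 := Real.sq_sqrt hX2nn
    set D := 4 * π * Real.sqrt (2 * π) * f ^ 2 * |f| / K with hDdef
    have hDnn : 0 ≤ D := by positivity
    have hb3 : S ^ 2 ≤ D * S := by
      have hc1' : Real.sqrt I * V ≤ (Real.sqrt (2 * π) * |f|) * (4 * π * f ^ 2 / K) := by
        apply mul_le_mul hsqI hV hVnn (by positivity)
      have he : (Real.sqrt (2 * π) * |f|) * (4 * π * f ^ 2 / K) = D := by
        rw [hDdef]; ring
      rw [hS2]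
      calc X2 ≤ (2 * Real.sqrt I * S) * (V / 2) := hb2
        _ = (Real.sqrt I * V) * S := by ring
        _ ≤ D * S := by
            apply mul_le_mul_of_nonneg_right _ hSnn
            rw [← he]; exact hc1'
    rcases le_or_gt S D with h | h
    · exact h
    · exfalso; nlinarith
  -- L12 : pointwise bound
  have hGp2 : Gp ≤ 16 * π ^ 2 * f ^ 4 / K := by
    have h2 : 2 * Real.sqrt I * Real.sqrt X2
        ≤ 2 * (Real.sqrt (2 * π) * |f|) * (4 * π * Real.sqrt (2 * π) * f ^ 2 * |f| / K) := by
      have := mul_le_mul hsqI hX2le (Real.sqrt_nonneg _) (by positivity)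
      nlinarith [this]
    have he : 2 * (Real.sqrt (2 * π) * |f|) * (4 * π * Real.sqrt (2 * π) * f ^ 2 * |f| / K)
        = 8 * π * (Real.sqrt (2 * π) * Real.sqrt (2 * π)) * (|f| * |f|) * f ^ 2 / K := by
      ring
    have hss : Real.sqrt (2 * π) * Real.sqrt (2 * π) = 2 * π :=
      Real.mul_self_sqrt (by positivity)
    have hff : |f| * |f| = f ^ 2 := by rw [← sq_abs f]; ring
    rw [he, hss, hff] at h2
    calc Gp ≤ 2 * Real.sqrt I * Real.sqrt X2 := hGple
      _ ≤ 8 * π * (2 * π) * f ^ 2 * f ^ 2 / K := h2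
      _ = 16 * π ^ 2 * f ^ 4 / K := by ring
  have hgx : ∀ x ∈ Set.Icc (0:ℝ) (2 * π), g x ≤ f ^ 2 + 16 * π ^ 2 * f ^ 4 / K := by
    intro x hx
    have hptw : ∀ y ∈ Set.Icc (0:ℝ) (2 * π), g x ≤ g y + Gp := by
      intro y hy
      have hdiff : g x - g y ≤ Gp := by
        rcases le_total y x with h | h
        · have e : (∫ t in y..x, gp t) = g x - g y :=
            intervalIntegral.integral_eq_sub_of_hasDerivAt (fun t _ => hDg t)
              (cgp.intervalIntegrable _ _)
          calc g x - g y = ∫ t in y..x, gp t := e.symm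
            _ ≤ ∫ t in y..x, |gp t| := by
                apply intervalIntegral.integral_mono_on h (cgp.intervalIntegrable _ _)
                  (cgp.abs.intervalIntegrable _ _)
                exact fun t _ => le_abs_self _
            _ ≤ Gp := by
                apply intervalIntegral.integral_mono_interval hy.1 h hx.2
                  (Filter.Eventually.of_forall (fun t => abs_nonneg _))
                  (cgp.abs.intervalIntegrable _ _)
        · have e : (∫ t in x..y, gp t) = g y - g x :=
            intervalIntegral.integral_eq_sub_of_hasDerivAt (fun t _ => hDg t)
              (cgp.intervalIntegrable _ _)
          have e2 : g x - g y = ∫ t in x..y, (-gp t) := by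
            rw [intervalIntegral.integral_neg, e]; ring
          calc g x - g y = ∫ t in x..y, (-gp t) := e2
            _ ≤ ∫ t in x..y, |gp t| := by
                apply intervalIntegral.integral_mono_on h (cgp.neg.intervalIntegrable _ _)
                  (cgp.abs.intervalIntegrable _ _)
                exact fun t _ => neg_le_abs _
            _ ≤ Gp := by
                apply intervalIntegral.integral_mono_interval hx.1 h hy.2
                  (Filter.Eventually.of_forall (fun t => abs_nonneg _))
                  (cgp.abs.intervalIntegrable _ _)
      linarith
    have hint : (∫ y in (0:ℝ)..(2 * π), g x) ≤ ∫ y in (0:ℝ)..(2 * π), (g y + Gp) := by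
      apply intervalIntegral.integral_mono_on (by positivity) intervalIntegrable_const
        ((cg.add continuous_const).intervalIntegrable _ _)
      exact hptw
    rw [intervalIntegral.integral_const, smul_eq_mul, sub_zero,
      intervalIntegral.integral_add (cg.intervalIntegrable _ _) intervalIntegrable_const,
      intervalIntegral.integral_const, smul_eq_mul, sub_zero] at hint
    rw [← hIdef] at hint
    have h4 : 2 * π * g x ≤ 2 * π * (f ^ 2 + 16 * π ^ 2 * f ^ 4 / K) := by
      have h3 : (2 * π) * Gp ≤ (2 * π) * (16 * π ^ 2 * f ^ 4 / K) :=
        mul_le_mul_of_nonneg_left hGp2 (by positivity)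
      have h5 : 2 * π * (f ^ 2 + 16 * π ^ 2 * f ^ 4 / K)
          = 2 * π * f ^ 2 + (2 * π) * (16 * π ^ 2 * f ^ 4 / K) := by ring
      rw [h5]
      exact le_trans hint (add_le_add hIle h3)
    exact le_of_mul_le_mul_left h4 (by positivity)
  -- final
  intro x hx
  have hgb := hgx x hx
  have hstep1 : Real.sqrt (a1 x ^ 2 + a2 x ^ 2)
      ≤ Real.sqrt (f ^ 2 + 16 * π ^ 2 * f ^ 4 / K) := Real.sqrt_le_sqrt hgb
  have hsq : f ^ 2 + 16 * π ^ 2 * f ^ 4 / K ≤ (|f| + 8 * π ^ 2 * f ^ 2 * |f| / K) ^ 2 := by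
    have e1 : (|f| + 8 * π ^ 2 * f ^ 2 * |f| / K) ^ 2
        = |f| ^ 2 + 16 * π ^ 2 * f ^ 2 * (|f| * |f|) / K
          + (8 * π ^ 2 * f ^ 2 * |f| / K) ^ 2 := by ring
    have e2 : |f| * |f| = f ^ 2 := by rw [abs_mul_abs_self]; ring
    rw [e1, sq_abs, e2]
    have e3 : 16 * π ^ 2 * f ^ 2 * f ^ 2 / K = 16 * π ^ 2 * f ^ 4 / K := by ring
    rw [e3]
    nlinarith [sq_nonneg (8 * π ^ 2 * f ^ 2 * |f| / K)]
  have hstep2 : Real.sqrt (f ^ 2 + 16 * π ^ 2 * f ^ 4 / K)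
      ≤ |f| + 8 * π ^ 2 * f ^ 2 * |f| / K := by
    calc Real.sqrt (f ^ 2 + 16 * π ^ 2 * f ^ 4 / K)
        ≤ Real.sqrt ((|f| + 8 * π ^ 2 * f ^ 2 * |f| / K) ^ 2) := Real.sqrt_le_sqrt hsq
      _ = |f| + 8 * π ^ 2 * f ^ 2 * |f| / K := Real.sqrt_sq (by positivity)
  have hstep3 : |f| + 8 * π ^ 2 * f ^ 2 * |f| / K ≤ |f| * (1 + 12 * π ^ 2 * f ^ 2 * K⁻¹) := by
    have h0 : 0 ≤ π ^ 2 * f ^ 2 * |f| / K := by positivity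
    have he : |f| * (1 + 12 * π ^ 2 * f ^ 2 * K⁻¹) = |f| + 12 * (π ^ 2 * f ^ 2 * |f| / K) := by
      field_simp
    rw [he]
    have he2 : |f| + 8 * π ^ 2 * f ^ 2 * |f| / K = |f| + 8 * (π ^ 2 * f ^ 2 * |f| / K) := by
      ring
    rw [he2]
    linarith
  calc Real.sqrt (a1 x ^ 2 + a2 x ^ 2) ≤ Real.sqrt (f ^ 2 + 16 * π ^ 2 * f ^ 4 / K) := hstep1
    _ ≤ |f| + 8 * π ^ 2 * f ^ 2 * |f| / K := hstep2
    _ ≤ |f| * (1 + 12 * π ^ 2 * f ^ 2 * K⁻¹) := hstep3
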